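/- Let X be an n×n complex matrix having at most one nonzero entry in each row and at most one nonzero entry in each column. Then for every k ≥ 1, the rank of X^k equals the number of sequences (i_0, i_1, …, i_k) of indices such that the entry X_{i_{t−1} i_t} is nonzero for all t = 1,…,k (i.e. the number of k-subchains, paths of k consecutive lines, in the diagram whose lines join i to j whenever X_{ij} ≠ 0). -/

import Mathlib

open Matrix

/-- Rank of a matrix with at most one nonzero entry in each row and column equals
the number of nonzero columns. -/
lemma lineDiagram_rank_eq {n : ℕ} (Y : Matrix (Fin n) (Fin n) ℂ)
    (hrow : ∀ i j j' : Fin n, Y i j ≠ 0 → Y i j' ≠ 0 → j = j')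
    (hcol : ∀ i i' j : Fin n, Y i j ≠ 0 → Y i' j ≠ 0 → i = i') :
    Y.rank = Nat.card {j : Fin n // ∃ i, Y i j ≠ 0} := by
  classical
  have hr : ∀ j : {j : Fin n // ∃ i, Y i j ≠ 0}, ∃ i, Y i j.1 ≠ 0 := fun j => j.2
  choose r hrne using hr
  have hcolzero : ∀ (j : {j : Fin n // ∃ i, Y i j ≠ 0}) (i : Fin n),
      i ≠ r j → Y i j.1 = 0 := by
    intro j i hne
    by_contra h
    exact hne (hcol i (r j) j.1 h (hrne j))
  have hcoleq : ∀ j : {j : Fin n // ∃ i, Y i j ≠ 0},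
      Yᵀ j.1 = Y (r j) j.1 • (Pi.single (r j) (1:ℂ) : Fin n → ℂ) := by
    intro j
    funext i
    by_cases h : i = r j
    · subst h; simp [transpose_apply]
    · simp [transpose_apply, hcolzero j i h, Pi.single_eq_of_ne h]
  have hrinj : Function.Injective r := by
    intro j j' h
    exact Subtype.ext (hrow (r j) j.1 j'.1 (hrne j) (h ▸ hrne j'))
  have hli : LinearIndependent ℂ
      (fun j : {j : Fin n // ∃ i, Y i j ≠ 0} => (Pi.single (r j) (1:ℂ) : Fin n → ℂ)) := by
    have h2 := (Pi.basisFun ℂ (Fin n)).linearIndependent.comp r hrinj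
    convert h2 using 1
    funext j
    simp [Function.comp]
  have hspan : Submodule.span ℂ (Set.range Yᵀ) =
      Submodule.span ℂ (Set.range fun j : {j : Fin n // ∃ i, Y i j ≠ 0} =>
        (Pi.single (r j) (1:ℂ) : Fin n → ℂ)) := by
    apply le_antisymm <;> rw [Submodule.span_le] <;> rintro _ ⟨j, rfl⟩
    · by_cases hj : ∃ i, Y i j ≠ 0
      · rw [hcoleq ⟨j, hj⟩]
        exact Submodule.smul_mem _ _ (Submodule.subset_span ⟨⟨j, hj⟩, rfl⟩)
      · push_neg at hj
        have hz : Yᵀ j = 0 := by funext i; simpa [transpose_apply] using hj i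
        rw [hz]; exact Submodule.zero_mem _
    · have hne := hrne j
      have heq : (Pi.single (r j) (1:ℂ) : Fin n → ℂ) = (Y (r j) j.1)⁻¹ • Yᵀ j.1 := by
        rw [hcoleq j, smul_smul, inv_mul_cancel₀ hne, one_smul]
      dsimp only
      rw [heq]
      exact Submodule.smul_mem _ _ (Submodule.subset_span ⟨j.1, rfl⟩)
  rw [rank_eq_finrank_span_cols, show Y.col = Yᵀ from rfl, hspan, finrank_span_eq_card hli,
    Nat.card_eq_fintype_card]

/-- Entry of a product is nonzero iff there is an intermediate index, when the left
factor has at most one nonzero entry in each row. -/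
lemma lineDiagram_mul_ne_zero_iff {n : ℕ} (X Y : Matrix (Fin n) (Fin n) ℂ)
    (hrow : ∀ i j j' : Fin n, X i j ≠ 0 → X i j' ≠ 0 → j = j') (i j : Fin n) :
    (X * Y) i j ≠ 0 ↔ ∃ m, X i m ≠ 0 ∧ Y m j ≠ 0 := by
  constructor
  · intro h
    rw [mul_apply] at h
    obtain ⟨m, _, hm⟩ := Finset.exists_ne_zero_of_sum_ne_zero h
    exact ⟨m, left_ne_zero_of_mul hm, right_ne_zero_of_mul hm⟩
  · rintro ⟨m, hX, hY⟩
    rw [mul_apply, Finset.sum_eq_single m]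
    · exact mul_ne_zero hX hY
    · intro b _ hb
      by_cases h : X i b = 0
      · rw [h, zero_mul]
      · exact absurd (hrow i b m h hX) hb
    · intro h; exact absurd (Finset.mem_univ m) h

/-- Powers of a line-diagram matrix are line-diagram matrices. -/
lemma lineDiagram_pow {n : ℕ} (X : Matrix (Fin n) (Fin n) ℂ)
    (hrow : ∀ i j j' : Fin n, X i j ≠ 0 → X i j' ≠ 0 → j = j')
    (hcol : ∀ i i' j : Fin n, X i j ≠ 0 → X i' j ≠ 0 → i = i') (k : ℕ) :
    (∀ i j j' : Fin n, (X ^ k) i j ≠ 0 → (X ^ k) i j' ≠ 0 → j = j') ∧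
      (∀ i i' j : Fin n, (X ^ k) i j ≠ 0 → (X ^ k) i' j ≠ 0 → i = i') := by
  induction k with
  | zero =>
    constructor
    · intro i j j' h h'
      rw [pow_zero] at h h'
      simp only [one_apply, ne_eq, ite_eq_right_iff, Classical.not_imp] at h h'
      rw [← h.1, ← h'.1]
    · intro i i' j h h'
      rw [pow_zero] at h h'
      simp only [one_apply, ne_eq, ite_eq_right_iff, Classical.not_imp] at h h'
      rw [h.1, h'.1]
  | succ k ih =>
    constructor
    · intro i j j' h h'
      rw [pow_succ', lineDiagram_mul_ne_zero_iff X _ hrow] at h h'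
      obtain ⟨m, hm1, hm2⟩ := h
      obtain ⟨m', hm1', hm2'⟩ := h'
      have : m = m' := hrow i m m' hm1 hm1'
      subst this
      exact ih.1 m j j' hm2 hm2'
    · intro i i' j h h'
      rw [pow_succ', lineDiagram_mul_ne_zero_iff X _ hrow] at h h'
      obtain ⟨m, hm1, hm2⟩ := h
      obtain ⟨m', hm1', hm2'⟩ := h'
      have : m = m' := ih.2 m m' j hm2 hm2'
      subst this
      exact hcol i i' m hm1 hm1'

/-- A `k`-subchain gives a nonzero entry of `X ^ k`. -/
lemma lineDiagram_chain_to_entry {n : ℕ} (X : Matrix (Fin n) (Fin n) ℂ)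
    (hrow : ∀ i j j' : Fin n, X i j ≠ 0 → X i j' ≠ 0 → j = j') :
    ∀ (k : ℕ) (f : Fin (k + 1) → Fin n),
      (∀ t : Fin k, X (f t.castSucc) (f t.succ) ≠ 0) →
      (X ^ k) (f 0) (f (Fin.last k)) ≠ 0 := by
  intro k
  induction k with
  | zero =>
    intro f _
    simp [pow_zero, one_apply, Fin.last]
  | succ k ih =>
    intro f hf
    have htail : ∀ t : Fin k, X (Fin.tail f t.castSucc) (Fin.tail f t.succ) ≠ 0 := by
      intro t
      have := hf t.succ
      exact this
    have h1 := ih (Fin.tail f) htail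
    have h1' : (X ^ k) (f 1) (f (Fin.last (k + 1))) ≠ 0 := by
      have e0 : Fin.tail f 0 = f 1 := rfl
      have el : Fin.tail f (Fin.last k) = f (Fin.last (k + 1)) := by
        simp [Fin.tail, Fin.succ_last]
      rwa [e0, el] at h1
    rw [pow_succ', lineDiagram_mul_ne_zero_iff X _ hrow]
    refine ⟨f 1, ?_, h1'⟩
    have := hf 0
    simpa using this

/-- A nonzero entry of `X ^ k` gives a `k`-subchain starting at the given row. -/
lemma lineDiagram_entry_to_chain {n : ℕ} (X : Matrix (Fin n) (Fin n) ℂ)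
    (hrow : ∀ i j j' : Fin n, X i j ≠ 0 → X i j' ≠ 0 → j = j') :
    ∀ (k : ℕ) (i j : Fin n), (X ^ k) i j ≠ 0 →
      ∃ f : Fin (k + 1) → Fin n, f 0 = i ∧ ∀ t : Fin k, X (f t.castSucc) (f t.succ) ≠ 0 := by
  intro k
  induction k with
  | zero =>
    intro i j _
    exact ⟨fun _ => i, rfl, fun t => t.elim0⟩
  | succ k ih =>
    intro i j h
    rw [pow_succ', lineDiagram_mul_ne_zero_iff X _ hrow] at h
    obtain ⟨m, hm1, hm2⟩ := h
    obtain ⟨f, hf0, hf⟩ := ih m j hm2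
    refine ⟨Fin.cons i f, Fin.cons_zero _ _, ?_⟩
    intro t
    induction t using Fin.cases with
    | zero =>
      have h1 : (Fin.cons i f : Fin (k + 2) → Fin n) (0 : Fin (k+1)).castSucc = i := by
        simp
      have h2 : (Fin.cons i f : Fin (k + 2) → Fin n) (0 : Fin (k+1)).succ = f 0 := by
        simp [Fin.succ_zero_eq_one]
      rw [h1, h2, hf0]
      exact hm1
    | succ s =>
      have h1 : (Fin.cons i f : Fin (k + 2) → Fin n) s.succ.castSucc = f s.castSucc := by
        rw [← Fin.succ_castSucc, Fin.cons_succ]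
      have h2 : (Fin.cons i f : Fin (k + 2) → Fin n) s.succ.succ = f s.succ := by
        rw [Fin.cons_succ]
      rw [h1, h2]
      exact hf s

/-- For a complex `n × n` matrix `X` with at most one nonzero entry in each row and at most
one nonzero entry in each column (a simple line diagram), the rank of `X^k` equals the
number of `k`-subchains, i.e. the number of sequences `(i_0, …, i_k)` with
`X_{i_{t−1} i_t} ≠ 0` for all `t = 1, …, k`. -/
theorem rank_pow_eq_card_subchains (n : ℕ) (X : Matrix (Fin n) (Fin n) ℂ)
    (hrow : ∀ i j j' : Fin n, X i j ≠ 0 → X i j' ≠ 0 → j = j')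
    (hcol : ∀ i i' j : Fin n, X i j ≠ 0 → X i' j ≠ 0 → i = i') :
    ∀ k, 1 ≤ k →
      (X ^ k).rank =
        Nat.card {f : Fin (k + 1) → Fin n // ∀ t : Fin k, X (f t.castSucc) (f t.succ) ≠ 0} := by
  intro k _
  classical
  obtain ⟨hrowk, hcolk⟩ := lineDiagram_pow X hrow hcol k
  rw [lineDiagram_rank_eq (X ^ k) hrowk hcolk]
  -- number of nonzero columns = number of nonzero rows
  have hcards : Nat.card {j : Fin n // ∃ i, (X ^ k) i j ≠ 0} =
      Nat.card {i : Fin n // ∃ j, (X ^ k) i j ≠ 0} := by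
    refine Nat.card_eq_of_bijective
      (fun p => ⟨Classical.choose p.2, ⟨p.1, Classical.choose_spec p.2⟩⟩) ⟨?_, ?_⟩
    · intro p p' h
      have h1 := Classical.choose_spec p.2
      have h2 := Classical.choose_spec p'.2
      have he : Classical.choose p.2 = Classical.choose p'.2 := congrArg Subtype.val h
      rw [he] at h1
      exact Subtype.ext (hrowk _ p.1 p'.1 h1 h2)
    · rintro ⟨i, j, hij⟩
      refine ⟨⟨j, ⟨i, hij⟩⟩, ?_⟩
      apply Subtype.ext
      exact hcolk _ i j (Classical.choose_spec (⟨i, hij⟩ : ∃ i', (X ^ k) i' j ≠ 0)) hij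
  rw [hcards]
  -- number of nonzero rows = number of subchains
  refine (Nat.card_eq_of_bijective
    (fun f : {f : Fin (k + 1) → Fin n // ∀ t : Fin k, X (f t.castSucc) (f t.succ) ≠ 0} =>
      (⟨f.1 0, ⟨f.1 (Fin.last k), lineDiagram_chain_to_entry X hrow k f.1 f.2⟩⟩ :
        {i : Fin n // ∃ j, (X ^ k) i j ≠ 0})) ⟨?_, ?_⟩).symm
  · intro f f' h
    have h0 : f.1 0 = f'.1 0 := congrArg Subtype.val h
    apply Subtype.ext
    funext t
    induction t using Fin.induction with
    | zero => exact h0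
    | succ s ih =>
      have ha := f.2 s
      have hb := f'.2 s
      rw [ih] at ha
      exact hrow _ _ _ ha hb
  · rintro ⟨i, j, hij⟩
    obtain ⟨f, hf0, hf⟩ := lineDiagram_entry_to_chain X hrow k i j hij
    exact ⟨⟨f, hf⟩, Subtype.ext hf0⟩
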